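/- Let A, B ⊆ F_{p^m}^n be linear codes both having trivial hull with respect to the Hermitian inner product ⟨x,y⟩_θ = Σᵢ xᵢθ(yᵢ), where θ is a field automorphism. Then B = A·X for a permutation matrix X if and only if Σ^θ_B = Xᵀ·Σ^θ_A·X, where Σ^θ_U := θ(G_Uᵀ)(G_U·θ(G_Uᵀ))⁻¹G_U for a generator matrix G_U of U. -/

import Mathlib

open Matrix

/-- The Hermitian dual of a linear code `U ⊆ F_{p^m}^n` with respect to the Hermitian inner
product `⟨x, y⟩_θ = ∑ i, x i * θ (y i)` attached to a field automorphism `θ`. -/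
def hermDualCode {p m n : ℕ} [Fact p.Prime]
    (θ : GaloisField p m ≃+* GaloisField p m)
    (U : Submodule (GaloisField p m) (Fin n → GaloisField p m)) :
    Submodule (GaloisField p m) (Fin n → GaloisField p m) where
  carrier := {z | ∀ u ∈ U, ∑ i, u i * θ (z i) = 0}
  add_mem' := by
    intro a b ha hb u hu
    have h1 := ha u hu
    have h2 := hb u hu
    simp only [Set.mem_setOf_eq] at *
    calc ∑ i, u i * θ ((a + b) i)
        = (∑ i, u i * θ (a i)) + ∑ i, u i * θ (b i) := by
          rw [← Finset.sum_add_distrib]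
          exact Finset.sum_congr rfl fun i _ => by simp [map_add, mul_add]
      _ = 0 := by rw [h1, h2, add_zero]
  zero_mem' := by
    intro u hu
    simp
  smul_mem' := by
    intro c a ha u hu
    have h := ha u hu
    simp only [Set.mem_setOf_eq] at *
    calc ∑ i, u i * θ ((c • a) i) = θ c * ∑ i, u i * θ (a i) := by
          rw [Finset.mul_sum]
          exact Finset.sum_congr rfl fun i _ => by
            simp [smul_eq_mul, _root_.map_mul]; ring
      _ = 0 := by rw [h, mul_zero]

section Aux

variable {p m n k : ℕ} [Fact p.Prime] (θ : GaloisField p m ≃+* GaloisField p m)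

private lemma s14_mem_span_rows_iff (G : Matrix (Fin k) (Fin n) (GaloisField p m))
    (x : Fin n → GaloisField p m) :
    x ∈ Submodule.span (GaloisField p m) (Set.range G) ↔ ∃ c, vecMul c G = x := by
  change x ∈ Submodule.span (GaloisField p m) (Set.range G.row) ↔ _
  rw [← range_vecMulLinear]
  constructor
  · rintro ⟨c, rfl⟩; exact ⟨c, rfl⟩
  · rintro ⟨c, rfl⟩; exact ⟨c, rfl⟩

private lemma s14_sum_mul_theta (G : Matrix (Fin k) (Fin n) (GaloisField p m))
    (x : Fin n → GaloisField p m) (c : Fin k → GaloisField p m) :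
    ∑ i, x i * θ ((vecMul c G) i) = vecMul x (Gᵀ.map θ) ⬝ᵥ fun j => θ (c j) := by
  simp only [vecMul, dotProduct, map_apply, transpose_apply, map_sum, _root_.map_mul,
    Finset.mul_sum, Finset.sum_mul]
  rw [Finset.sum_comm]
  exact Finset.sum_congr rfl fun j _ => Finset.sum_congr rfl fun i _ => by ring

private lemma s14_isUnit_gram (G : Matrix (Fin k) (Fin n) (GaloisField p m))
    (hind : LinearIndependent (GaloisField p m) G)
    (U : Submodule (GaloisField p m) (Fin n → GaloisField p m))
    (hspan : Submodule.span (GaloisField p m) (Set.range G) = U)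
    (hhull : U ⊓ hermDualCode θ U = ⊥) :
    IsUnit (G * Gᵀ.map θ).det := by
  rw [isUnit_iff_ne_zero]
  intro hdet
  obtain ⟨v, hv0, hv⟩ := Matrix.exists_mulVec_eq_zero_iff.mpr hdet
  set c : Fin k → GaloisField p m := fun j => θ.symm (v j) with hc
  have hcv : (fun j => θ (c j)) = v := funext fun j => θ.apply_symm_apply (v j)
  have humem : vecMul c G ∈ U := by
    rw [← hspan]; exact (s14_mem_span_rows_iff G _).mpr ⟨c, rfl⟩
  have hdual : vecMul c G ∈ hermDualCode θ U := by
    show ∀ a ∈ U, ∑ i, a i * θ ((vecMul c G) i) = 0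
    intro a ha
    rw [← hspan] at ha
    obtain ⟨d, rfl⟩ := (s14_mem_span_rows_iff G a).mp ha
    rw [s14_sum_mul_theta, hcv, vecMul_vecMul, ← dotProduct_mulVec, hv, dotProduct_zero]
  have h0 : vecMul c G = 0 := by
    have h := Submodule.mem_inf.mpr ⟨humem, hdual⟩
    rw [hhull] at h
    simpa using h
  have hc0 : c = 0 := by
    apply Matrix.vecMul_injective_iff.mpr hind
    simpa [Matrix.zero_vecMul] using h0
  apply hv0
  funext j
  have := congr_fun hcv j
  rw [← this, congr_fun hc0 j]
  simp

private lemma s14_sigma_right (G : Matrix (Fin k) (Fin n) (GaloisField p m))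
    (h : IsUnit (G * Gᵀ.map θ).det) :
    G * (Gᵀ.map θ * (G * Gᵀ.map θ)⁻¹ * G) = G := by
  simp only [← Matrix.mul_assoc]
  rw [Matrix.mul_nonsing_inv _ h, Matrix.one_mul]

private lemma s14_sigma_left (G : Matrix (Fin k) (Fin n) (GaloisField p m))
    (h : IsUnit (G * Gᵀ.map θ).det) :
    (Gᵀ.map θ * (G * Gᵀ.map θ)⁻¹ * G) * Gᵀ.map θ = Gᵀ.map θ := by
  simp only [Matrix.mul_assoc]
  rw [Matrix.nonsing_inv_mul _ h, Matrix.mul_one]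

private lemma s14_sigma_mem (G : Matrix (Fin k) (Fin n) (GaloisField p m))
    (U : Submodule (GaloisField p m) (Fin n → GaloisField p m))
    (hspan : Submodule.span (GaloisField p m) (Set.range G) = U)
    (v : Fin n → GaloisField p m) :
    vecMul v (Gᵀ.map θ * (G * Gᵀ.map θ)⁻¹ * G) ∈ U := by
  rw [← hspan, ← vecMul_vecMul]
  exact (s14_mem_span_rows_iff G _).mpr ⟨_, rfl⟩

private lemma s14_sigma_fix (G : Matrix (Fin k) (Fin n) (GaloisField p m))
    (h : IsUnit (G * Gᵀ.map θ).det)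
    (U : Submodule (GaloisField p m) (Fin n → GaloisField p m))
    (hspan : Submodule.span (GaloisField p m) (Set.range G) = U)
    (u : Fin n → GaloisField p m) (hu : u ∈ U) :
    vecMul u (Gᵀ.map θ * (G * Gᵀ.map θ)⁻¹ * G) = u := by
  rw [← hspan] at hu
  obtain ⟨c, rfl⟩ := (s14_mem_span_rows_iff G u).mp hu
  rw [vecMul_vecMul, s14_sigma_right θ G h]

private lemma s14_sigma_ker (G : Matrix (Fin k) (Fin n) (GaloisField p m))
    (U : Submodule (GaloisField p m) (Fin n → GaloisField p m))
    (hspan : Submodule.span (GaloisField p m) (Set.range G) = U)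
    (w : Fin n → GaloisField p m)
    (hw : ∀ u ∈ U, ∑ i, w i * θ (u i) = 0) :
    vecMul w (Gᵀ.map θ * (G * Gᵀ.map θ)⁻¹ * G) = 0 := by
  have h0 : vecMul w (Gᵀ.map θ) = 0 := by
    funext j
    have hrow : G j ∈ U := by
      rw [← hspan]; exact Submodule.subset_span (Set.mem_range_self j)
    have := hw (G j) hrow
    simpa [vecMul, dotProduct, map_apply, transpose_apply] using this
  rw [Matrix.mul_assoc, ← vecMul_vecMul, h0, Matrix.zero_vecMul]

private lemma s14_sigma_perp (G : Matrix (Fin k) (Fin n) (GaloisField p m))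
    (h : IsUnit (G * Gᵀ.map θ).det)
    (U : Submodule (GaloisField p m) (Fin n → GaloisField p m))
    (hspan : Submodule.span (GaloisField p m) (Set.range G) = U)
    (v u : Fin n → GaloisField p m) (hu : u ∈ U) :
    ∑ i, (vecMul v (Gᵀ.map θ * (G * Gᵀ.map θ)⁻¹ * G)) i * θ (u i)
      = ∑ i, v i * θ (u i) := by
  rw [← hspan] at hu
  obtain ⟨c, rfl⟩ := (s14_mem_span_rows_iff G u).mp hu
  rw [s14_sum_mul_theta, s14_sum_mul_theta, vecMul_vecMul, s14_sigma_left θ G h]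

private lemma s14_perm_entry (σ : Equiv.Perm (Fin n)) (i j : Fin n) :
    (σ.permMatrix (GaloisField p m)) i j = if σ i = j then 1 else 0 := by
  simp [PEquiv.toMatrix_apply, Equiv.toPEquiv_apply, Option.mem_def]

private lemma s14_vecMul_perm (σ : Equiv.Perm (Fin n)) (a : Fin n → GaloisField p m) :
    vecMul a (σ.permMatrix (GaloisField p m)) = fun j => a (σ.symm j) := by
  funext j
  show ∑ i, a i * (σ.permMatrix (GaloisField p m)) i j = a (σ.symm j)
  rw [Finset.sum_eq_single (σ.symm j)]
  · rw [s14_perm_entry, if_pos (by simp), mul_one]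
  · intro b _ hb
    rw [s14_perm_entry, if_neg (fun hj => hb (by rw [← hj]; simp)), mul_zero]
  · intro hmem; exact absurd (Finset.mem_univ _) hmem

private lemma s14_vecMul_permT (σ : Equiv.Perm (Fin n)) (a : Fin n → GaloisField p m) :
    vecMul a (σ.permMatrix (GaloisField p m))ᵀ = fun j => a (σ j) := by
  funext j
  show ∑ i, a i * (σ.permMatrix (GaloisField p m)) j i = a (σ j)
  rw [Finset.sum_eq_single (σ j)]
  · rw [s14_perm_entry, if_pos rfl, mul_one]
  · intro b _ hb
    rw [s14_perm_entry, if_neg (fun hj => hb hj.symm), mul_zero]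
  · intro hmem; exact absurd (Finset.mem_univ _) hmem

private lemma s14_matrix_ext_vecMul {M N : Matrix (Fin n) (Fin n) (GaloisField p m)}
    (h : ∀ v, vecMul v M = vecMul v N) : M = N := by
  ext i j
  have := congr_fun (h (Pi.single i 1)) j
  simpa [Matrix.single_one_vecMul] using this

end Aux

/-- Let `A, B ⊆ F_{p^m}^n` be linear codes with trivial hull with respect
to the Hermitian inner product `⟨x, y⟩_θ = ∑ i, x i * θ (y i)`, `θ` a field automorphism.
Then `B = A·X` for a permutation matrix `X` if and only if `Σ^θ_B = Xᵀ Σ^θ_A X`, where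
`Σ^θ_U := θ(G_Uᵀ) (G_U θ(G_Uᵀ))⁻¹ G_U` for a generator matrix `G_U` of `U`. -/
theorem statement14 {p m n k : ℕ} [Fact p.Prime] (hm : 1 ≤ m)
    (θ : GaloisField p m ≃+* GaloisField p m)
    (A B : Submodule (GaloisField p m) (Fin n → GaloisField p m))
    (GA GB : Matrix (Fin k) (Fin n) (GaloisField p m))
    (hAind : LinearIndependent (GaloisField p m) GA)
    (hAspan : Submodule.span (GaloisField p m) (Set.range GA) = A)
    (hBind : LinearIndependent (GaloisField p m) GB)
    (hBspan : Submodule.span (GaloisField p m) (Set.range GB) = B)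
    (hAhull : A ⊓ hermDualCode θ A = ⊥)
    (hBhull : B ⊓ hermDualCode θ B = ⊥)
    (σ : Equiv.Perm (Fin n)) :
    B = Submodule.map (Matrix.vecMulLinear (σ.permMatrix (GaloisField p m))) A ↔
      (GBᵀ.map θ) * (GB * GBᵀ.map θ)⁻¹ * GB =
        (σ.permMatrix (GaloisField p m))ᵀ * ((GAᵀ.map θ) * (GA * GAᵀ.map θ)⁻¹ * GA) *
          σ.permMatrix (GaloisField p m) := by
  classical
  have hMA := s14_isUnit_gram θ GA hAind A hAspan hAhull
  have hMB := s14_isUnit_gram θ GB hBind B hBspan hBhull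
  set X := σ.permMatrix (GaloisField p m) with hX
  set SA := GAᵀ.map θ * (GA * GAᵀ.map θ)⁻¹ * GA with hSA
  set SB := GBᵀ.map θ * (GB * GBᵀ.map θ)⁻¹ * GB with hSB
  have hXXT : ∀ a : Fin n → GaloisField p m, vecMul (vecMul a X) Xᵀ = a := by
    intro a
    rw [hX, s14_vecMul_perm, s14_vecMul_permT]
    funext j; simp
  have hQ : ∀ v : Fin n → GaloisField p m,
      vecMul v (Xᵀ * SA * X) = vecMul (vecMul (vecMul v Xᵀ) SA) X := by
    intro v; rw [vecMul_vecMul, vecMul_vecMul, Matrix.mul_assoc]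
  constructor
  · intro hBA
    apply s14_matrix_ext_vecMul
    intro v
    have hv1 : vecMul v SB ∈ B := s14_sigma_mem θ GB B hBspan v
    rw [hBA] at hv1
    obtain ⟨a, haA, hax⟩ := Submodule.mem_map.mp hv1
    have hax' : vecMul a X = vecMul v SB := by rw [← hax]; simp [Matrix.vecMulLinear_apply]
    have hfix : vecMul (vecMul v SB) (Xᵀ * SA * X) = vecMul v SB := by
      rw [hQ, ← hax', hXXT a, s14_sigma_fix θ GA hMA A hAspan a haA]
    have hwK : ∀ u ∈ B, ∑ i, (v - vecMul v SB) i * θ (u i) = 0 := by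
      intro u hu
      have hperp := s14_sigma_perp θ GB hMB B hBspan v u hu
      simp only [Pi.sub_apply, sub_mul, Finset.sum_sub_distrib]
      rw [hperp, sub_self]
    have hwA : ∀ u ∈ A, ∑ i, (vecMul (v - vecMul v SB) Xᵀ) i * θ (u i) = 0 := by
      intro u hu
      have huB : vecMul u X ∈ B := by
        rw [hBA]
        exact Submodule.mem_map.mpr ⟨u, hu, by simp [Matrix.vecMulLinear_apply]⟩
      have hres := hwK _ huB
      calc ∑ i, (vecMul (v - vecMul v SB) Xᵀ) i * θ (u i)
          = ∑ i, (v - vecMul v SB) (σ i) * θ (u i) := by rw [hX, s14_vecMul_permT]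
        _ = ∑ j, (v - vecMul v SB) j * θ (u (σ.symm j)) := by
            rw [← Equiv.sum_comp σ (fun j => (v - vecMul v SB) j * θ (u (σ.symm j)))]
            exact Finset.sum_congr rfl fun i _ => by rw [Equiv.symm_apply_apply]
        _ = ∑ j, (v - vecMul v SB) j * θ ((vecMul u X) j) := by rw [hX, s14_vecMul_perm]
        _ = 0 := hres
    have hker : vecMul (vecMul (v - vecMul v SB) Xᵀ) SA = 0 :=
      s14_sigma_ker θ GA A hAspan _ hwA
    have hwQ : vecMul (v - vecMul v SB) (Xᵀ * SA * X) = 0 := by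
      rw [hQ, hker, Matrix.zero_vecMul]
    have hsplit : vecMul v (Xᵀ * SA * X) =
        vecMul (vecMul v SB) (Xᵀ * SA * X) + vecMul (v - vecMul v SB) (Xᵀ * SA * X) := by
      rw [← Matrix.add_vecMul]
      congr 1
      simp
    rw [hsplit, hfix, hwQ, add_zero]
  · intro hEq
    ext v
    constructor
    · intro hv
      have hfix : vecMul v SB = v := s14_sigma_fix θ GB hMB B hBspan v hv
      rw [hEq, hQ] at hfix
      exact Submodule.mem_map.mpr ⟨vecMul (vecMul v Xᵀ) SA,
        s14_sigma_mem θ GA A hAspan _, by simpa [Matrix.vecMulLinear_apply] using hfix⟩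
    · intro hv
      obtain ⟨a, haA, rfl⟩ := Submodule.mem_map.mp hv
      have hfix : vecMul (vecMul a X) SB = vecMul a X := by
        rw [hEq, hQ, hXXT a, s14_sigma_fix θ GA hMA A hAspan a haA]
      have hmem := s14_sigma_mem θ GB B hBspan (vecMul a X)
      rw [hSB] at hfix
      rw [hfix] at hmem
      simpa [Matrix.vecMulLinear_apply] using hmem
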